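/- arXiv:2312.00400 — 3 statements merged into one kernel-verified Lean document; each statement's English description precedes it below -/
import Mathlib

section
/- Let Ω_0 be the Weyl group of type C_n with simple generators t_1,…,t_n as above (t_1 the long-root reflection), and let Ω'_0 be the subgroup generated by t'_2 := t_2 t_1 t_2 and t'_i := t_i for 3 ≤ i ≤ n, which is a Coxeter group of type C_{n−1}. If t'_{i_1} ⋯ t'_{i_ℓ} is a reduced expression for w ∈ Ω'_0 with respect to the generators t'_2,…,t'_n, then replacing each occurrence of t'_2 by t_2 t_1 t_2 and leaving the other letters unchanged yields a reduced expression for w in Ω_0 with respect to t_1,…,t_n. -/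
/-- Generators of the Weyl group of type `Cₙ` as signed-permutation matrices:
`genC n ⟨0,_⟩` is the sign change in the first coordinate (reflection along
`2ε₁`), and for `i ≥ 1`, `genC n i` swaps the coordinates `i-1` and `i`
(reflection along `ε_{i+1} − ε_i`). -/
noncomputable def genC (n : ℕ) (i : Fin n) : Matrix (Fin n) (Fin n) ℝ :=
  if i.val = 0 then
    Matrix.diagonal (fun j => if j = i then (-1 : ℝ) else 1)
  else
    Matrix.of fun a b =>
      if a = Equiv.swap i ⟨i.val - 1, lt_of_le_of_lt (Nat.sub_le _ _) i.isLt⟩ b then (1 : ℝ) else 0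

/-- Generators `t'_2 = t₂ t₁ t₂, t'_3 = t₃, …, t'_n = t_n` of the subgroup
`Ω'₀` (of type `C_{n−1}`), indexed by `i : Fin n` with `1 ≤ i.val`. -/
noncomputable def genC' (n : ℕ) (hn : 0 < n) (i : Fin n) : Matrix (Fin n) (Fin n) ℝ :=
  if i.val = 1 then genC n i * genC n ⟨0, hn⟩ * genC n i else genC n i



/-- Signed permutations: a permutation together with signs (true = +1). -/
@[ext] structure SP (n : ℕ) where
  pm : Equiv.Perm (Fin n)
  sg : Fin n → Bool

namespace SP

variable {n : ℕ}

instance : Monoid (SP n) where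
  mul x y := ⟨x.pm * y.pm, fun b => x.sg (y.pm b) == y.sg b⟩
  one := ⟨1, fun _ => true⟩
  mul_assoc x y z := by
    refine SP.ext (mul_assoc x.pm y.pm z.pm) ?_
    funext b
    show ((x.sg (y.pm (z.pm b)) == y.sg (z.pm b)) == z.sg b) =
      (x.sg (y.pm (z.pm b)) == (y.sg (z.pm b) == z.sg b))
    cases x.sg (y.pm (z.pm b)) <;> cases y.sg (z.pm b) <;> cases z.sg b <;> rfl
  one_mul x := by
    refine SP.ext (one_mul x.pm) ?_
    funext b; show (true == x.sg b) = x.sg b; cases x.sg b <;> rfl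
  mul_one x := by
    refine SP.ext (mul_one x.pm) ?_
    funext b
    show (x.sg ((1 : Equiv.Perm (Fin n)) b) == true) = x.sg b
    simp only [Equiv.Perm.one_apply]
    cases x.sg b <;> rfl

@[simp] lemma mul_pm (x y : SP n) : (x * y).pm = x.pm * y.pm := rfl
@[simp] lemma mul_sg (x y : SP n) (b : Fin n) : (x * y).sg b = (x.sg (y.pm b) == y.sg b) := rfl
@[simp] lemma one_pm : (1 : SP n).pm = 1 := rfl
@[simp] lemma one_sg (b : Fin n) : (1 : SP n).sg b = true := rfl

/-- The signed permutation matrix of an element of `SP n`. -/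
noncomputable def tm (w : SP n) : Matrix (Fin n) (Fin n) ℝ :=
  Matrix.of fun a b => if a = w.pm b then (if w.sg b then (1:ℝ) else -1) else 0

lemma tm_apply (w : SP n) (a b : Fin n) :
    tm w a b = if a = w.pm b then (if w.sg b then (1:ℝ) else -1) else 0 := rfl

lemma tm_one : tm (1 : SP n) = 1 := by
  ext a b
  simp [tm_apply, Matrix.one_apply]

lemma tm_mul (x y : SP n) : tm (x * y) = tm x * tm y := by
  ext a b
  rw [Matrix.mul_apply]
  rw [Finset.sum_eq_single (y.pm b)]
  · by_cases hxy : a = x.pm (y.pm b)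
    · simp only [tm_apply, mul_pm, mul_sg, Equiv.Perm.mul_apply, if_pos rfl, if_pos hxy, if_true]
      rcases Bool.eq_false_or_eq_true (x.sg (y.pm b)) with hx' | hx' <;>
        rcases Bool.eq_false_or_eq_true (y.sg b) with hy' | hy' <;>
          simp only [hx', hy'] <;> norm_num [hxy]
    · simp only [tm_apply, mul_pm, mul_sg, Equiv.Perm.mul_apply, if_pos rfl, if_neg hxy,
        zero_mul, hxy, if_false]
  · intro c _ hc
    rw [tm_apply x a c, tm_apply y c b, if_neg hc, mul_zero]
  · intro h; exact absurd (Finset.mem_univ _) h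

lemma tm_injective : Function.Injective (tm (n := n)) := by
  intro v w h
  have key : ∀ b, v.pm b = w.pm b ∧ v.sg b = w.sg b := by
    intro b
    have h1 : tm v (v.pm b) b = tm w (v.pm b) b := by rw [h]
    rw [tm_apply, tm_apply, if_pos rfl] at h1
    by_cases hbc : v.pm b = w.pm b
    · refine ⟨hbc, ?_⟩
      rw [if_pos hbc] at h1
      rcases Bool.eq_false_or_eq_true (v.sg b) with hv | hv <;>
        rcases Bool.eq_false_or_eq_true (w.sg b) with hw | hw <;>
          rw [hv, hw] at h1 ⊢ <;> first | rfl | norm_num at h1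
    · rw [if_neg hbc] at h1
      rcases Bool.eq_false_or_eq_true (v.sg b) with hv | hv <;> rw [hv] at h1 <;> norm_num at h1
  refine SP.ext (Equiv.ext fun b => (key b).1) (funext fun b => (key b).2)

lemma tm_prod (m : List (SP n)) : tm m.prod = (m.map tm).prod := by
  induction m with
  | nil => simpa using tm_one
  | cons a t ih => simp [List.prod_cons, tm_mul, ih]

end SP
namespace SP

variable {n : ℕ}

/-- The signed-permutation lift of the generator `genC n i`. -/
def G (i : Fin n) : SP n :=
  if i.val = 0 then ⟨1, fun j => decide ¬(j = i)⟩
  else ⟨Equiv.swap i ⟨i.val - 1, lt_of_le_of_lt (Nat.sub_le _ _) i.isLt⟩, fun _ => true⟩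

/-- The signed-permutation lift of the generator `genC' n hn i`. -/
def Gp (hn : 0 < n) (i : Fin n) : SP n :=
  if i.val = 1 then G i * G ⟨0, hn⟩ * G i else G i

lemma tm_G (i : Fin n) : tm (G i) = genC n i := by
  by_cases h0 : i.val = 0
  · rw [genC, if_pos h0, G, if_pos h0]
    ext a b
    rw [tm_apply, Matrix.diagonal_apply]
    simp only [Equiv.Perm.one_apply]
    by_cases hab : a = b
    · subst hab
      simp only [if_true, eq_self_iff_true]
      by_cases hai : a = i
      · simp [hai]
      · simp [hai]
    · simp [hab]
  · rw [genC, if_neg h0, G, if_neg h0]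
    ext a b
    rw [tm_apply]
    simp only [Matrix.of_apply]
    split <;> rfl

lemma tm_Gp (hn : 0 < n) (i : Fin n) : tm (Gp hn i) = genC' n hn i := by
  rw [Gp, genC']
  by_cases h1 : i.val = 1
  · rw [if_pos h1, if_pos h1, tm_mul, tm_mul, tm_G, tm_G]
  · rw [if_neg h1, if_neg h1, tm_G]

/-- The window value of `w` at position `b` : `±(σ(b)+1)`. -/
def fval (w : SP n) (b : Fin n) : ℤ :=
  (if w.sg b then 1 else -1) * ((w.pm b : ℕ) + 1)

lemma fval_natAbs (w : SP n) (b : Fin n) : (fval w b).natAbs = (w.pm b : ℕ) + 1 := by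
  rw [fval]
  rcases Bool.eq_false_or_eq_true (w.sg b) with h | h <;> simp [h] <;> omega

lemma fval_pos_iff (w : SP n) (b : Fin n) : 0 < fval w b ↔ w.sg b = true := by
  rw [fval]
  rcases Bool.eq_false_or_eq_true (w.sg b) with h | h <;> simp [h] <;> omega

lemma fval_neg_iff (w : SP n) (b : Fin n) : fval w b < 0 ↔ w.sg b = false := by
  rw [fval]
  rcases Bool.eq_false_or_eq_true (w.sg b) with h | h <;> simp [h] <;> omega

lemma fval_ne_zero (w : SP n) (b : Fin n) : fval w b ≠ 0 := by
  intro h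
  have := fval_natAbs w b
  rw [h] at this
  simp at this

lemma fval_natAbs_le (w : SP n) (b : Fin n) : (fval w b).natAbs ≤ n := by
  rw [fval_natAbs]
  exact (w.pm b).isLt

lemma fval_natAbs_pos (w : SP n) (b : Fin n) : 1 ≤ (fval w b).natAbs := by
  rw [fval_natAbs]; omega

lemma fval_abs_inj (w : SP n) {b c : Fin n}
    (h : (fval w b).natAbs = (fval w c).natAbs) : b = c := by
  rw [fval_natAbs, fval_natAbs] at h
  exact w.pm.injective (Fin.ext (by omega))

lemma fval_inj {v w : SP n} (h : ∀ b, fval v b = fval w b) : v = w := by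
  have key : ∀ b, v.pm b = w.pm b ∧ v.sg b = w.sg b := by
    intro b
    have h1 := h b
    have h2 : (fval v b).natAbs = (fval w b).natAbs := by rw [h1]
    rw [fval_natAbs, fval_natAbs] at h2
    refine ⟨Fin.ext (by omega), ?_⟩
    have h3 : (0 < fval v b ↔ 0 < fval w b) := by rw [h1]
    rw [fval_pos_iff, fval_pos_iff] at h3
    rcases Bool.eq_false_or_eq_true (v.sg b) with hv | hv <;>
      rcases Bool.eq_false_or_eq_true (w.sg b) with hw | hw <;>
        rw [hv, hw] <;> rw [hv, hw] at h3 <;> simp at h3 ⊢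
  exact SP.ext (Equiv.ext fun b => (key b).1) (funext fun b => (key b).2)

lemma fval_one (b : Fin n) : fval (1 : SP n) b = (b : ℕ) + 1 := by
  rw [fval]; simp

/-- Sign-flip of the values `±k`. -/
def Tflip (k : ℤ) (x : ℤ) : ℤ := if x = k ∨ x = -k then -x else x

/-- Swap of the values `±m ↔ ±(m+1)` preserving signs. -/
def Tsw (m : ℤ) (x : ℤ) : ℤ :=
  if x = m then m + 1 else if x = -m then -(m+1)
  else if x = m + 1 then m else if x = -(m+1) then -m else x

lemma fval_G0_mul (hn : 0 < n) (w : SP n) (b : Fin n) :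
    fval (G ⟨0, hn⟩ * w) b = Tflip 1 (fval w b) := by
  have hg : G (⟨0, hn⟩ : Fin n)
      = (⟨(1 : Equiv.Perm (Fin n)), fun j => decide ¬(j = (⟨0, hn⟩ : Fin n))⟩ : SP n) := by
    rw [G, if_pos rfl]
  rw [hg]
  set g : SP n := (⟨(1 : Equiv.Perm (Fin n)), fun j => decide ¬(j = (⟨0, hn⟩ : Fin n))⟩ : SP n)
    with hgdef
  have h1 : (g * w).pm b = w.pm b := by rw [mul_pm, hgdef]; rfl
  have h2 : (g * w).sg b = ((decide ¬(w.pm b = ⟨0, hn⟩)) == w.sg b) := by rw [mul_sg, hgdef]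
  rw [fval, h1, h2, Tflip, fval]
  by_cases hb : w.pm b = ⟨0, hn⟩
  · have hv : ((w.pm b : ℕ) : ℤ) = 0 := by rw [hb]; rfl
    rcases Bool.eq_false_or_eq_true (w.sg b) with h | h <;>
      simp [hb, h, hv]
  · have hne : ((w.pm b : ℕ) : ℤ) ≠ 0 := by
      simp only [ne_eq, Nat.cast_eq_zero]
      intro h; exact hb (Fin.ext h)
    rcases Bool.eq_false_or_eq_true (w.sg b) with h | h <;>
      simp [hb, h] <;> omega

end SP
namespace SP

variable {n : ℕ}

lemma flip_sq (η : Fin n → Bool) :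
    ((⟨1, η⟩ : SP n) * (⟨1, η⟩ : SP n)) = 1 := by
  refine SP.ext (one_mul 1) (funext fun b => ?_)
  show (η ((1 : Equiv.Perm (Fin n)) b) == η b) = true
  simp only [Equiv.Perm.one_apply]
  cases η b <;> rfl

lemma G_sq (i : Fin n) : G i * G i = 1 := by
  by_cases h0 : i.val = 0
  · rw [G, if_pos h0]; exact flip_sq _
  · rw [G, if_neg h0]
    refine SP.ext ?_ (funext fun b => ?_)
    · exact Equiv.swap_mul_self _ _
    · rfl

lemma Gp_one_eq (hn : 0 < n) (i : Fin n) (h1 : i.val = 1) :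
    Gp hn i = (⟨1, fun j => decide ¬(j = i)⟩ : SP n) := by
  have h0 : ¬ i.val = 0 := by omega
  have hi' : (⟨i.val - 1, lt_of_le_of_lt (Nat.sub_le _ _) i.isLt⟩ : Fin n) = ⟨0, hn⟩ :=
    Fin.ext (by simp [h1])
  rw [Gp, if_pos h1, G, if_neg h0, hi']
  have hG0 : G (⟨0, hn⟩ : Fin n)
      = (⟨(1 : Equiv.Perm (Fin n)), fun j => decide ¬(j = (⟨0, hn⟩ : Fin n))⟩ : SP n) := by
    rw [G, if_pos rfl]
  rw [hG0]
  set s := Equiv.swap i (⟨0, hn⟩ : Fin n) with hs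
  refine SP.ext ?_ (funext fun b => ?_)
  · show s * ((1 : Equiv.Perm (Fin n)) * s) = 1
    rw [one_mul]
    exact Equiv.swap_mul_self _ _
  · show ((true == decide ¬((1 * s : Equiv.Perm (Fin n)) b = ⟨0, hn⟩)) == true)
      = decide ¬(b = i)
    have hsb : (1 * s : Equiv.Perm (Fin n)) b = s b := by rw [one_mul]
    rw [hsb]
    have heq : (s b = ⟨0, hn⟩) ↔ (b = i) := by
      rw [hs]
      constructor
      · intro h
        have h2 := congrArg (Equiv.swap i (⟨0, hn⟩ : Fin n)) h
        rw [Equiv.swap_apply_self, Equiv.swap_apply_right] at h2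
        exact h2
      · intro h; rw [h, Equiv.swap_apply_left]
    simp only [heq]
    by_cases hb : b = i
    · simp [hb]
    · simp [hb]

lemma fval_Gp1_mul (hn : 0 < n) (i : Fin n) (h1 : i.val = 1) (w : SP n) (b : Fin n) :
    fval (Gp hn i * w) b = Tflip 2 (fval w b) := by
  rw [Gp_one_eq hn i h1]
  set g : SP n := (⟨1, fun j => decide ¬(j = i)⟩ : SP n) with hgdef
  have hf1 : (g * w).pm b = w.pm b := by rw [mul_pm, hgdef]; rfl
  have hf2 : (g * w).sg b = ((decide ¬(w.pm b = i)) == w.sg b) := by rw [mul_sg, hgdef]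
  rw [fval, hf1, hf2, Tflip, fval]
  by_cases hb : w.pm b = i
  · have hv : ((w.pm b : ℕ) : ℤ) = 1 := by simp [hb, h1]
    rcases Bool.eq_false_or_eq_true (w.sg b) with h | h <;> simp [hb, h, hv] <;> omega
  · have hne : ¬ ((w.pm b : ℕ) : ℤ) = 1 := by
      intro h
      apply hb
      apply Fin.ext
      have : (w.pm b : ℕ) = 1 := by exact_mod_cast h
      rw [this, h1]
    rcases Bool.eq_false_or_eq_true (w.sg b) with h | h <;> simp [hb, h] <;> omega

set_option maxHeartbeats 1000000 in
lemma fval_Gsw_mul (i : Fin n) (hi : 1 ≤ i.val) (w : SP n) (b : Fin n) :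
    fval (G i * w) b = Tsw (i.val : ℤ) (fval w b) := by
  have h0 : ¬ i.val = 0 := by omega
  set i' : Fin n := ⟨i.val - 1, lt_of_le_of_lt (Nat.sub_le _ _) i.isLt⟩ with hi'def
  have hvi' : (i' : ℕ) = i.val - 1 := rfl
  have hG : G i = (⟨Equiv.swap i i', fun _ => true⟩ : SP n) := by rw [G, if_neg h0]
  rw [hG]
  set g : SP n := (⟨Equiv.swap i i', fun _ => true⟩ : SP n) with hgdef
  have hf1 : (g * w).pm b = Equiv.swap i i' (w.pm b) := by rw [mul_pm, hgdef]; rfl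
  have hf2 : (g * w).sg b = w.sg b := by
    rw [mul_sg, hgdef]
    show (true == w.sg b) = w.sg b
    cases w.sg b <;> rfl
  rw [fval, hf1, hf2, Tsw, fval]
  by_cases hbi : w.pm b = i
  · rw [hbi, Equiv.swap_apply_left]
    rcases Bool.eq_false_or_eq_true (w.sg b) with h | h <;> simp only [h] <;>
      split_ifs <;> omega
  · by_cases hbi' : w.pm b = i'
    · rw [hbi', Equiv.swap_apply_right]
      rcases Bool.eq_false_or_eq_true (w.sg b) with h | h <;> simp only [h] <;>
        split_ifs <;> omega
    · rw [Equiv.swap_apply_of_ne_of_ne hbi hbi']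
      have hv1 : ¬ (w.pm b : ℕ) = i.val := fun h => hbi (Fin.ext h)
      have hv2 : ¬ (w.pm b : ℕ) = i.val - 1 := fun h => hbi' (Fin.ext (by rw [hvi']; exact h))
      rcases Bool.eq_false_or_eq_true (w.sg b) with h | h <;> simp only [h] <;>
        split_ifs <;> omega

lemma Gp_sq (hn : 0 < n) (i : Fin n) : Gp hn i * Gp hn i = 1 := by
  by_cases h1 : i.val = 1
  · rw [Gp_one_eq hn i h1]; exact flip_sq _
  · rw [Gp, if_neg h1]; exact G_sq i

end SP
namespace SP

variable {n : ℕ}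

/-- Number of inversions of a window. -/
def Inv (h : Fin n → ℤ) : ℤ :=
  ∑ p : Fin n × Fin n, if p.1 < p.2 ∧ h p.2 < h p.1 then 1 else 0

/-- Sum of the absolute values of the negative entries of a window. -/
def Nsum (h : Fin n → ℤ) : ℤ := ∑ b, if h b < 0 then -h b else 0

/-- Number of negative entries of a window. -/
def Negc (h : Fin n → ℤ) : ℤ := ∑ b, if h b < 0 then 1 else 0

/-- The length statistic. -/
def Len (h : Fin n → ℤ) : ℤ := Inv h + Nsum h

lemma Inv_nonneg (h : Fin n → ℤ) : 0 ≤ Inv h :=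
  Finset.sum_nonneg fun p _ => by split <;> omega

lemma Nsum_nonneg (h : Fin n → ℤ) : 0 ≤ Nsum h :=
  Finset.sum_nonneg fun b _ => by split <;> omega

lemma Len_nonneg (h : Fin n → ℤ) : 0 ≤ Len h := by
  have := Inv_nonneg h; have := Nsum_nonneg h; rw [Len]; omega

lemma Negc_nonneg (h : Fin n → ℤ) : 0 ≤ Negc h :=
  Finset.sum_nonneg fun b _ => by split <;> omega

lemma sum_shift_one {α : Type*} [Fintype α] [DecidableEq α]
    (F F' : α → ℤ) (a : α) (d : ℤ)
    (hpt : ∀ x, F' x = F x + (if x = a then d else 0)) :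
    ∑ x, F' x = (∑ x, F x) + d := by
  rw [Finset.sum_congr rfl fun x _ => hpt x, Finset.sum_add_distrib]
  congr 1
  rw [Finset.sum_ite_eq' Finset.univ a (fun _ => d), if_pos (Finset.mem_univ a)]

lemma sum_shift_two {α : Type*} [Fintype α] [DecidableEq α]
    (F F' : α → ℤ) (a b : α) (hab : a ≠ b) (d e : ℤ)
    (hpt : ∀ x, F' x = F x + (if x = a then d else 0) + (if x = b then e else 0)) :
    ∑ x, F' x = (∑ x, F x) + d + e := by
  rw [Finset.sum_congr rfl fun x _ => hpt x, Finset.sum_add_distrib, Finset.sum_add_distrib]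
  congr 1
  · congr 1
    rw [Finset.sum_ite_eq' Finset.univ a (fun _ => d), if_pos (Finset.mem_univ a)]
  · rw [Finset.sum_ite_eq' Finset.univ b (fun _ => e), if_pos (Finset.mem_univ b)]

/-! Integer lemmas about the transformations. -/

lemma Tflip_fix (k x : ℤ) (h1 : ¬ x = k) (h2 : ¬ x = -k) : Tflip k x = x := by
  rw [Tflip, if_neg (by tauto)]

lemma Tflip_lt_iff (k : ℕ) (hk : 1 ≤ k) (x y : ℤ)
    (hx : 1 ≤ x.natAbs) (hy : 1 ≤ y.natAbs) (hne : x.natAbs ≠ y.natAbs)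
    (h1 : ¬(x.natAbs = k ∧ y.natAbs < k)) (h2 : ¬(y.natAbs = k ∧ x.natAbs < k)) :
    (Tflip (k : ℤ) y < Tflip (k : ℤ) x ↔ y < x) := by
  rw [Tflip, Tflip]
  split_ifs <;> omega

lemma Tsw_fix (m : ℕ) (x : ℤ) (h1 : x.natAbs ≠ m) (h2 : x.natAbs ≠ m + 1) :
    Tsw (m : ℤ) x = x := by
  rw [Tsw]
  split_ifs <;> omega

lemma Tsw_neg_iff (m : ℕ) (hm : 1 ≤ m) (x : ℤ) (hx : x ≠ 0) :
    (Tsw (m : ℤ) x < 0 ↔ x < 0) := by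
  rw [Tsw]
  split_ifs <;> omega

lemma Tsw_lt_iff (m : ℕ) (hm : 1 ≤ m) (x y : ℤ)
    (hx : 1 ≤ x.natAbs) (hy : 1 ≤ y.natAbs) (hne : x.natAbs ≠ y.natAbs)
    (h1 : ¬(x.natAbs = m ∧ y.natAbs = m + 1)) (h2 : ¬(y.natAbs = m ∧ x.natAbs = m + 1)) :
    (Tsw (m : ℤ) y < Tsw (m : ℤ) x ↔ y < x) := by
  rw [Tsw, Tsw]
  split_ifs <;> omega

end SP
namespace SP

variable {n : ℕ}

lemma len_one : Len (fval (1 : SP n)) = 0 ∧ Negc (fval (1 : SP n)) = 0 := by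
  constructor
  · rw [Len, Inv, Nsum]
    rw [Finset.sum_eq_zero, Finset.sum_eq_zero]
    · ring
    · intro b _
      rw [fval_one, if_neg (by omega)]
    · intro p _
      rw [if_neg ?_]
      rintro ⟨h1, h2⟩
      rw [fval_one, fval_one] at h2
      have : (p.1 : ℕ) < (p.2 : ℕ) := h1
      omega
  · rw [Negc]
    rw [Finset.sum_eq_zero]
    intro b _
    rw [fval_one, if_neg (by omega)]

lemma len_G0 (hn : 0 < n) (w : SP n) :
    Len (fval (G ⟨0, hn⟩ * w)) =
      Len (fval w) + (if 0 < fval w (w.pm.symm ⟨0, hn⟩) then 1 else -1) := by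
  set q := w.pm.symm ⟨0, hn⟩ with hqdef
  have hwq : w.pm q = ⟨0, hn⟩ := Equiv.apply_symm_apply _ _
  have hq1 : (fval w q).natAbs = 1 := by rw [fval_natAbs, hwq]
  have hother : ∀ b, b ≠ q → (fval w b).natAbs ≠ 1 := fun b hb h =>
    hb (fval_abs_inj w (h.trans hq1.symm))
  have hTf : ∀ b, fval (G ⟨0, hn⟩ * w) b = Tflip 1 (fval w b) := fval_G0_mul hn w
  have hInv : Inv (fval (G ⟨0, hn⟩ * w)) = Inv (fval w) := by
    rw [Inv, Inv]
    refine Finset.sum_congr rfl fun p _ => ?_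
    by_cases hp : p.1 = p.2
    · have hnl : ¬ p.1 < p.2 := by rw [hp]; exact lt_irrefl _
      rw [if_neg (fun hc => hnl hc.1), if_neg (fun hc => hnl hc.1)]
    · have hne : (fval w p.1).natAbs ≠ (fval w p.2).natAbs := fun hc => hp (fval_abs_inj w hc)
      rw [hTf, hTf]
      refine if_congr (and_congr_right fun _ => ?_) rfl rfl
      exact Tflip_lt_iff 1 le_rfl _ _ (fval_natAbs_pos w p.1) (fval_natAbs_pos w p.2) hne
        (fun hc => by have := fval_natAbs_pos w p.2; omega)
        (fun hc => by have := fval_natAbs_pos w p.1; omega)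
  have hNs : Nsum (fval (G ⟨0, hn⟩ * w)) = Nsum (fval w) + (if 0 < fval w q then 1 else -1) := by
    rw [Nsum, Nsum]
    refine sum_shift_one _ _ q _ fun b => ?_
    by_cases hb : b = q
    · rw [hb, if_pos rfl, hTf]
      rcases (by omega : fval w q = 1 ∨ fval w q = -1) with h1 | h1 <;>
        rw [h1] <;> norm_num [Tflip]
    · have hne := hother b hb
      have h1 : ¬ fval w b = 1 := by omega
      have h2 : ¬ fval w b = -(1:ℤ) := by omega
      rw [hTf, Tflip_fix 1 _ h1 h2, if_neg hb, add_zero]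
  rw [Len, Len, hInv, hNs]
  ring

end SP
namespace SP

variable {n : ℕ}

set_option maxHeartbeats 1000000 in
lemma swap_delta (m x y : ℤ) (hm : 1 ≤ m) (P Q : Prop) [Decidable P] [Decidable Q]
    (hpq : Q ↔ ¬ P)
    (hx : x = m ∨ x = -m) (hy : y = m + 1 ∨ y = -(m + 1)) :
    ((if P ∧ Tsw m y < Tsw m x then (1:ℤ) else 0) - (if P ∧ y < x then 1 else 0))
      + ((if Q ∧ Tsw m x < Tsw m y then 1 else 0) - (if Q ∧ x < y then 1 else 0))
      + (if x < 0 then 1 else 0) + (if y < 0 then -1 else 0)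
    = (if 0 < x then (if 0 < y then (if P then (1:ℤ) else -1) else -1)
       else (if 0 < y then 1 else (if P then -1 else 1))) := by
  have e1 : Tsw m m = m + 1 := by rw [Tsw]; split_ifs <;> omega
  have e2 : Tsw m (-m) = -(m + 1) := by rw [Tsw]; split_ifs <;> omega
  have e3 : Tsw m (m + 1) = m := by rw [Tsw]; split_ifs <;> omega
  have e4 : Tsw m (-(m + 1)) = -m := by rw [Tsw]; split_ifs <;> omega
  by_cases hP : P <;>
    rcases hx with hx | hx <;> rcases hy with hy | hy <;> rw [hx, hy] <;>
      simp only [e1, e2, e3, e4, hP, hpq, iff_true, iff_false, not_true, not_false_iff,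
        true_and, false_and, and_true, and_false, if_true, if_false, not_not] <;>
      split_ifs <;> omega

set_option maxHeartbeats 1600000 in
lemma len_Gsw (i i' : Fin n) (hi : 1 ≤ i.val) (hvi' : (i' : ℕ) = i.val - 1) (w : SP n) :
    Negc (fval (G i * w)) = Negc (fval w) ∧
    Len (fval (G i * w)) = Len (fval w) +
      (if 0 < fval w (w.pm.symm i') then
         (if 0 < fval w (w.pm.symm i) then (if w.pm.symm i' < w.pm.symm i then 1 else -1)
          else -1)
       else
         (if 0 < fval w (w.pm.symm i) then 1
          else (if w.pm.symm i' < w.pm.symm i then -1 else 1))) := by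
  set pa := w.pm.symm i' with hpadef
  set pb := w.pm.symm i with hpbdef
  have hwa : w.pm pa = i' := w.pm.apply_symm_apply i'
  have hwb : w.pm pb = i := w.pm.apply_symm_apply i
  have ha : (fval w pa).natAbs = i.val := by rw [fval_natAbs, hwa, hvi']; omega
  have hb : (fval w pb).natAbs = i.val + 1 := by rw [fval_natAbs, hwb]
  have hab : pa ≠ pb := by
    intro h
    rw [h, hb] at ha
    omega
  have hA : fval w pa = (i.val : ℤ) ∨ fval w pa = -(i.val : ℤ) := by omega
  have hB : fval w pb = ((i.val : ℤ) + 1) ∨ fval w pb = -((i.val : ℤ) + 1) := by omega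
  have honlya : ∀ b, b ≠ pa → (fval w b).natAbs ≠ i.val := fun b h hc =>
    h (fval_abs_inj w (hc.trans ha.symm))
  have honlyb : ∀ b, b ≠ pb → (fval w b).natAbs ≠ i.val + 1 := fun b h hc =>
    h (fval_abs_inj w (hc.trans hb.symm))
  have hTf : ∀ b, fval (G i * w) b = Tsw (i.val : ℤ) (fval w b) := fval_Gsw_mul i hi w
  have e1 : Tsw (i.val : ℤ) ((i.val : ℤ)) = (i.val : ℤ) + 1 := by
    rw [Tsw]; split_ifs <;> omega
  have e2 : Tsw (i.val : ℤ) (-(i.val : ℤ)) = -((i.val : ℤ) + 1) := by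
    rw [Tsw]; split_ifs <;> omega
  have e3 : Tsw (i.val : ℤ) ((i.val : ℤ) + 1) = (i.val : ℤ) := by
    rw [Tsw]; split_ifs <;> omega
  have e4 : Tsw (i.val : ℤ) (-((i.val : ℤ) + 1)) = -(i.val : ℤ) := by
    rw [Tsw]; split_ifs <;> omega
  have hNegc : Negc (fval (G i * w)) = Negc (fval w) := by
    rw [Negc, Negc]
    refine Finset.sum_congr rfl fun b _ => ?_
    rw [hTf]
    exact if_congr (Tsw_neg_iff i.val hi _ (fval_ne_zero w b)) rfl rfl
  have hNs : Nsum (fval (G i * w)) = Nsum (fval w)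
      + (if fval w pa < 0 then 1 else 0) + (if fval w pb < 0 then -1 else 0) := by
    rw [Nsum, Nsum]
    refine sum_shift_two _ _ pa pb hab _ _ fun b => ?_
    by_cases h1 : b = pa
    · rw [h1, if_pos rfl, if_neg hab, add_zero, hTf]
      rcases hA with h2 | h2 <;> rw [h2]
      · rw [e1]; split_ifs <;> omega
      · rw [e2]; split_ifs <;> omega
    · by_cases h2 : b = pb
      · rw [h2, if_neg (Ne.symm hab), if_pos rfl, add_zero, hTf]
        rcases hB with h3 | h3 <;> rw [h3]
        · rw [e3]; split_ifs <;> omega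
        · rw [e4]; split_ifs <;> omega
      · rw [hTf, Tsw_fix i.val _ (honlya b h1) (honlyb b h2), if_neg h1, if_neg h2,
          add_zero, add_zero]
  have hInv : Inv (fval (G i * w)) = Inv (fval w)
      + ((if pa < pb ∧ Tsw (i.val:ℤ) (fval w pb) < Tsw (i.val:ℤ) (fval w pa) then 1 else 0)
         - (if pa < pb ∧ fval w pb < fval w pa then 1 else 0))
      + ((if pb < pa ∧ Tsw (i.val:ℤ) (fval w pa) < Tsw (i.val:ℤ) (fval w pb) then 1 else 0)
         - (if pb < pa ∧ fval w pa < fval w pb then 1 else 0)) := by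
    rw [Inv, Inv]
    refine sum_shift_two _ _ ((pa, pb) : Fin n × Fin n) ((pb, pa) : Fin n × Fin n)
      (fun h => hab (congrArg Prod.fst h)) _ _ fun p => ?_
    by_cases hp1 : p = (pa, pb)
    · rw [hp1, if_pos rfl, if_neg (fun h => hab (congrArg Prod.fst h)), add_zero]
      show (if pa < pb ∧ fval (G i * w) pb < fval (G i * w) pa then (1:ℤ) else 0) = _
      rw [hTf, hTf]
      ring
    · by_cases hp2 : p = (pb, pa)
      · rw [hp2, if_neg (fun h => hab (congrArg Prod.fst h).symm), if_pos rfl, add_zero]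
        show (if pb < pa ∧ fval (G i * w) pa < fval (G i * w) pb then (1:ℤ) else 0) = _
        rw [hTf, hTf]
        ring
      · rw [if_neg hp1, if_neg hp2, add_zero, add_zero]
        by_cases hpp : p.1 = p.2
        · have hnl : ¬ p.1 < p.2 := by rw [hpp]; exact lt_irrefl _
          rw [if_neg (fun hc => hnl hc.1), if_neg (fun hc => hnl hc.1)]
        · have hne : (fval w p.1).natAbs ≠ (fval w p.2).natAbs := fun hc =>
            hpp (fval_abs_inj w hc)
          rw [hTf, hTf]
          refine if_congr (and_congr_right fun _ => ?_) rfl rfl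
          refine Tsw_lt_iff i.val hi _ _ (fval_natAbs_pos w p.1) (fval_natAbs_pos w p.2) hne
            ?_ ?_
          · rintro ⟨hc1, hc2⟩
            exact hp1 (Prod.ext_iff.mpr
              ⟨fval_abs_inj w (hc1.trans ha.symm), fval_abs_inj w (hc2.trans hb.symm)⟩)
          · rintro ⟨hc1, hc2⟩
            exact hp2 (Prod.ext_iff.mpr
              ⟨fval_abs_inj w (hc2.trans hb.symm), fval_abs_inj w (hc1.trans ha.symm)⟩)
  refine ⟨hNegc, ?_⟩
  have hpq : (pb < pa) ↔ ¬ (pa < pb) := by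
    constructor
    · exact fun h => lt_asymm h
    · exact fun h => lt_of_le_of_ne (le_of_not_gt h) (Ne.symm hab)
  have hd := swap_delta (i.val : ℤ) (fval w pa) (fval w pb) (by exact_mod_cast hi)
    (pa < pb) (pb < pa) hpq hA hB
  rw [Len, Len, hInv, hNs]
  linear_combination hd

end SP
namespace SP

variable {n : ℕ}

set_option maxHeartbeats 1600000 in
lemma len_Gp1 (hn : 0 < n) (i : Fin n) (h1 : i.val = 1) (w : SP n)
    (hw : fval w ⟨0, hn⟩ = 1) :
    (0 < fval w (w.pm.symm i) →
      Len (fval (Gp hn i * w)) = Len (fval w) + 3 ∧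
      Negc (fval (Gp hn i * w)) = Negc (fval w) + 1) ∧
    (fval w (w.pm.symm i) < 0 →
      Len (fval (Gp hn i * w)) = Len (fval w) - 3 ∧
      Negc (fval (Gp hn i * w)) = Negc (fval w) - 1) := by
  set q0 : Fin n := ⟨0, hn⟩ with hq0def
  set p2 := w.pm.symm i with hp2def
  have hTf : ∀ b, fval (Gp hn i * w) b = Tflip 2 (fval w b) := fval_Gp1_mul hn i h1 w
  have hq0abs : (fval w q0).natAbs = 1 := by rw [hw]; rfl
  have hwp2 : w.pm p2 = i := w.pm.apply_symm_apply i
  have hp2abs : (fval w p2).natAbs = 2 := by rw [fval_natAbs, hwp2, h1]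
  have hp2ne : p2 ≠ q0 := by
    intro h
    rw [h, hq0abs] at hp2abs
    omega
  have honly2 : ∀ b, b ≠ p2 → (fval w b).natAbs ≠ 2 := fun b h hc =>
    h (fval_abs_inj w (hc.trans hp2abs.symm))
  have honly1 : ∀ b, b ≠ q0 → (fval w b).natAbs ≠ 1 := fun b h hc =>
    h (fval_abs_inj w (hc.trans hq0abs.symm))
  have hA2 : fval w p2 = 2 ∨ fval w p2 = -2 := by omega
  have hq0min : ∀ u : Fin n, ¬ u < q0 := by
    intro u hu
    have : (u : ℕ) < (q0 : ℕ) := hu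
    have : (q0 : ℕ) = 0 := rfl
    omega
  have hlt : q0 < p2 := by
    have h2 : (p2 : ℕ) ≠ 0 := by
      intro hc
      exact hp2ne (Fin.ext (hc.trans rfl))
    have : (q0 : ℕ) = 0 := rfl
    exact Fin.lt_def.mpr (by omega)
  have t1 : Tflip 2 (1 : ℤ) = 1 := by rw [Tflip]; norm_num
  have t2 : Tflip 2 (2 : ℤ) = -2 := by rw [Tflip]; norm_num
  have t3 : Tflip 2 (-2 : ℤ) = 2 := by rw [Tflip]; norm_num
  have hInv : Inv (fval (Gp hn i * w)) = Inv (fval w)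
      + ((if q0 < p2 ∧ Tflip 2 (fval w p2) < Tflip 2 (fval w q0) then (1:ℤ) else 0)
         - (if q0 < p2 ∧ fval w p2 < fval w q0 then 1 else 0)) := by
    rw [Inv, Inv]
    refine sum_shift_one _ _ ((q0, p2) : Fin n × Fin n) _ fun p => ?_
    by_cases hp : p = (q0, p2)
    · rw [hp, if_pos rfl]
      show (if q0 < p2 ∧ fval (Gp hn i * w) p2 < fval (Gp hn i * w) q0 then (1:ℤ) else 0) = _
      rw [hTf, hTf]
      ring
    · rw [if_neg hp, add_zero]
      by_cases hpp : p.1 = p.2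
      · have hnl : ¬ p.1 < p.2 := by rw [hpp]; exact lt_irrefl _
        rw [if_neg (fun hc => hnl hc.1), if_neg (fun hc => hnl hc.1)]
      · by_cases h2q : p.2 = q0
        · rw [if_neg (fun hc => hq0min p.1 (h2q ▸ hc.1)),
            if_neg (fun hc => hq0min p.1 (h2q ▸ hc.1))]
        · have hne : (fval w p.1).natAbs ≠ (fval w p.2).natAbs := fun hc =>
            hpp (fval_abs_inj w hc)
          rw [hTf, hTf]
          refine if_congr (and_congr_right fun _ => ?_) rfl rfl
          refine Tflip_lt_iff 2 (by omega) _ _ (fval_natAbs_pos w p.1) (fval_natAbs_pos w p.2)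
            hne ?_ ?_
          · rintro ⟨hc1, hc2⟩
            have hy := fval_natAbs_pos w p.2
            exact (honly1 p.2 h2q) (by omega)
          · rintro ⟨hc1, hc2⟩
            have hx := fval_natAbs_pos w p.1
            refine hp (Prod.ext_iff.mpr ⟨?_, ?_⟩)
            · exact fval_abs_inj w (by omega : (fval w p.1).natAbs = (fval w q0).natAbs)
            · exact fval_abs_inj w (hc1.trans hp2abs.symm)
  have hNs : Nsum (fval (Gp hn i * w)) = Nsum (fval w)
      + (if 0 < fval w p2 then 2 else -2) := by
    rw [Nsum, Nsum]
    refine sum_shift_one _ _ p2 _ fun b => ?_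
    by_cases hb : b = p2
    · rw [hb, if_pos rfl, hTf]
      rcases hA2 with h2 | h2 <;> rw [h2]
      · rw [t2]; norm_num
      · rw [t3]; norm_num
    · have hne := honly2 b hb
      have hx1 : ¬ fval w b = 2 := by omega
      have hx2 : ¬ fval w b = -(2:ℤ) := by omega
      rw [hTf, Tflip_fix 2 _ hx1 hx2, if_neg hb, add_zero]
  have hNegc : Negc (fval (Gp hn i * w)) = Negc (fval w)
      + (if 0 < fval w p2 then 1 else -1) := by
    rw [Negc, Negc]
    refine sum_shift_one _ _ p2 _ fun b => ?_
    by_cases hb : b = p2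
    · rw [hb, if_pos rfl, hTf]
      rcases hA2 with h2 | h2 <;> rw [h2]
      · rw [t2]; norm_num
      · rw [t3]; norm_num
    · have hne := honly2 b hb
      have hx1 : ¬ fval w b = 2 := by omega
      have hx2 : ¬ fval w b = -(2:ℤ) := by omega
      rw [hTf, Tflip_fix 2 _ hx1 hx2, if_neg hb, add_zero]
  constructor
  · intro hpos
    have hv2 : fval w p2 = 2 := by omega
    constructor
    · rw [Len, Len, hInv, hNs, hv2, hw, t1, t2]
      rw [if_pos ⟨hlt, by norm_num⟩, if_neg (fun hc => by
        have := hc.2; omega), if_pos (by norm_num : (0:ℤ) < 2)]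
      ring
    · rw [hNegc, hv2, if_pos (by norm_num : (0:ℤ) < 2)]
  · intro hneg
    have hv2 : fval w p2 = -2 := by omega
    constructor
    · rw [Len, Len, hInv, hNs, hv2, hw, t1, t3]
      rw [if_neg (fun hc => by have := hc.2; omega),
        if_pos ⟨hlt, by norm_num⟩, if_neg (by norm_num : ¬ (0:ℤ) < -2)]
      ring
    · rw [hNegc, hv2, if_neg (by norm_num : ¬ (0:ℤ) < -2)]
      ring

end SP
namespace SP

variable {n : ℕ}

/-- The modified length statistic `ℓ' = ℓ - 2·neg`. -/
def Lenp (h : Fin n → ℤ) : ℤ := Len h - 2 * Negc h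

/-- `w` fixes `ε₁`. -/
def Fix1 (hn : 0 < n) (w : SP n) : Prop := fval w ⟨0, hn⟩ = 1

lemma fix1_one (hn : 0 < n) : Fix1 hn (1 : SP n) := by
  rw [Fix1, fval_one]
  norm_num [Fin.val]

lemma fix1_pm {hn : 0 < n} {w : SP n} (hw : Fix1 hn w) : w.pm ⟨0, hn⟩ = ⟨0, hn⟩ := by
  have h1 : (fval w ⟨0, hn⟩).natAbs = 1 := by rw [hw]; rfl
  rw [fval_natAbs] at h1
  have h0 : ((⟨0, hn⟩ : Fin n) : ℕ) = 0 := rfl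
  exact Fin.ext (by omega)

lemma fix1_symm {hn : 0 < n} {w : SP n} (hw : Fix1 hn w) : w.pm.symm ⟨0, hn⟩ = ⟨0, hn⟩ := by
  have := congrArg w.pm.symm (fix1_pm hw)
  rw [Equiv.symm_apply_apply] at this
  exact this.symm

lemma fix1_Gp_mul (hn : 0 < n) (i : Fin n) (hi : 1 ≤ i.val) (w : SP n) (hw : Fix1 hn w) :
    Fix1 hn (Gp hn i * w) := by
  rw [Fix1] at hw ⊢
  by_cases h1 : i.val = 1
  · rw [fval_Gp1_mul hn i h1, hw, Tflip]
    norm_num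
  · have hi2 : 2 ≤ i.val := by omega
    have h2 : (2 : ℤ) ≤ (i.val : ℤ) := by exact_mod_cast hi2
    rw [Gp, if_neg h1, fval_Gsw_mul i hi, hw, Tsw]
    split_ifs <;> omega

lemma len_G_le (hn : 0 < n) (i : Fin n) (w : SP n) :
    Len (fval (G i * w)) ≤ Len (fval w) + 1 := by
  by_cases h0 : i.val = 0
  · have hi : i = ⟨0, hn⟩ := Fin.ext h0
    rw [hi, len_G0 hn w]
    split_ifs <;> linarith
  · obtain ⟨-, hL⟩ := len_Gsw i ⟨i.val - 1, lt_of_le_of_lt (Nat.sub_le _ _) i.isLt⟩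
      (by omega) rfl w
    rw [hL]
    split_ifs <;> linarith

lemma len_word_le (hn : 0 < n) (m : List (Fin n)) :
    Len (fval ((m.map G).prod)) ≤ (m.length : ℤ) := by
  induction m with
  | nil =>
    simp only [List.map_nil, List.prod_nil, List.length_nil, Nat.cast_zero]
    exact le_of_eq (len_one).1
  | cons a t ih =>
    rw [List.map_cons, List.prod_cons, List.length_cons]
    have := len_G_le hn a ((t.map G).prod)
    push_cast
    linarith

lemma lenp_Gp_le (hn : 0 < n) (i : Fin n) (hi : 1 ≤ i.val) (w : SP n) (hw : Fix1 hn w) :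
    Lenp (fval (Gp hn i * w)) ≤ Lenp (fval w) + 1 := by
  by_cases h1 : i.val = 1
  · obtain ⟨hpos, hneg⟩ := len_Gp1 hn i h1 w hw
    rcases (fval_ne_zero w (w.pm.symm i)).lt_or_gt with hc | hc
    · obtain ⟨hL, hN⟩ := hneg hc
      rw [Lenp, Lenp, hL, hN]
      linarith
    · obtain ⟨hL, hN⟩ := hpos hc
      rw [Lenp, Lenp, hL, hN]
      linarith
  · have hGp : Gp hn i = G i := by rw [Gp, if_neg h1]
    obtain ⟨hN, hL⟩ := len_Gsw i ⟨i.val - 1, lt_of_le_of_lt (Nat.sub_le _ _) i.isLt⟩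
      (by omega) rfl w
    rw [Lenp, Lenp, hGp, hL, hN]
    split_ifs <;> linarith

/-- Key counting lemma along a reduced primed word. -/
lemma key_list (hn : 0 < n) (l : List (Fin n)) (hl : ∀ j ∈ l, 1 ≤ j.val) :
    Fix1 hn ((l.map (Gp hn)).prod) ∧
    Lenp (fval ((l.map (Gp hn)).prod)) ≤ (l.length : ℤ) ∧
    ((l.length : ℤ) ≤ Lenp (fval ((l.map (Gp hn)).prod)) →
      Len (fval ((l.map (Gp hn)).prod))
        = (l.length : ℤ) + 2 * (l.countP (fun j => decide (j.val = 1)) : ℤ)) := by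
  induction l with
  | nil =>
    refine ⟨fix1_one hn, ?_, ?_⟩
    · simp only [List.map_nil, List.prod_nil, List.length_nil, Nat.cast_zero]
      rw [Lenp, (len_one).1, (len_one).2]
      norm_num
    · intro _
      simp only [List.map_nil, List.prod_nil, List.length_nil, List.countP_nil, Nat.cast_zero]
      rw [(len_one).1]
      norm_num
  | cons a t ih =>
    have hat : 1 ≤ a.val := hl a List.mem_cons_self
    have hlt : ∀ j ∈ t, 1 ≤ j.val := fun j hj => hl j (List.mem_cons_of_mem a hj)
    obtain ⟨ihfix, ihle, ihkey⟩ := ih hlt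
    set V := (t.map (Gp hn)).prod with hVdef
    have hfix : Fix1 hn ((( a :: t).map (Gp hn)).prod) := by
      rw [List.map_cons, List.prod_cons]
      exact fix1_Gp_mul hn a hat V ihfix
    have hle : Lenp (fval (((a :: t).map (Gp hn)).prod)) ≤ ((a :: t).length : ℤ) := by
      rw [List.map_cons, List.prod_cons, List.length_cons]
      have := lenp_Gp_le hn a hat V ihfix
      push_cast
      linarith
    refine ⟨hfix, hle, ?_⟩
    intro hge
    rw [List.map_cons, List.prod_cons] at hge ⊢
    rw [List.length_cons] at hge ⊢
    have hVle : Lenp (fval V) ≤ (t.length : ℤ) := ihle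
    have hstep := lenp_Gp_le hn a hat V ihfix
    have hVge : (t.length : ℤ) ≤ Lenp (fval V) := by
      push_cast at hge
      linarith
    have hkey := ihkey hVge
    by_cases h1 : a.val = 1
    · obtain ⟨hpos, hneg⟩ := len_Gp1 hn a h1 V ihfix
      rcases (fval_ne_zero V (V.pm.symm a)).lt_or_gt with hc | hc
      · obtain ⟨hL, hN⟩ := hneg hc
        exfalso
        have : Lenp (fval (Gp hn a * V)) = Lenp (fval V) - 1 := by
          rw [Lenp, Lenp, hL, hN]; ring
        push_cast at hge
        linarith
      · obtain ⟨hL, hN⟩ := hpos hc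
        rw [List.countP_cons, if_pos (by simpa using h1)]
        rw [hL, hkey]
        push_cast
        ring
    · have hGp : Gp hn a = G a := by rw [Gp, if_neg h1]
      obtain ⟨hN, hL⟩ := len_Gsw a ⟨a.val - 1, lt_of_le_of_lt (Nat.sub_le _ _) a.isLt⟩
        hat rfl V
      rw [← hGp] at hN hL
      have hb1 : Len (fval (Gp hn a * V)) ≤ Len (fval V) + 1 := by
        rw [hL]; split_ifs <;> linarith
      have hb2 : Len (fval V) - 1 ≤ Len (fval (Gp hn a * V)) := by
        rw [hL]; split_ifs <;> linarith
      have hLW : Len (fval (Gp hn a * V)) = Len (fval V) + 1 := by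
        rw [Lenp] at hge hVle
        rw [hN] at hge
        push_cast at hge
        linarith
      rw [List.countP_cons, if_neg (by simpa using h1)]
      rw [hLW, hkey]
      push_cast
      ring

/-- Descent: every non-identity `ε₁`-fixing element admits a primed generator
decreasing both statistics. -/
lemma descent (hn : 0 < n) (hn2 : 2 ≤ n) (w : SP n) (hfix : Fix1 hn w) (hne : w ≠ 1) :
    ∃ i : Fin n, 1 ≤ i.val ∧ Len (fval (Gp hn i * w)) < Len (fval w) ∧
      Lenp (fval (Gp hn i * w)) ≤ Lenp (fval w) - 1 := by
  by_cases hex : ∃ b, fval w b < 0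
  · obtain ⟨b1, hb1⟩ := hex
    have hSne : ((Finset.univ.filter fun b => fval w b < 0).image fun b => (w.pm b).val).Nonempty :=
      ⟨(w.pm b1).val, Finset.mem_image.mpr ⟨b1, Finset.mem_filter.mpr ⟨Finset.mem_univ _, hb1⟩, rfl⟩⟩
    set k := ((Finset.univ.filter fun b => fval w b < 0).image fun b => (w.pm b).val).min' hSne
      with hkdef
    obtain ⟨b0, hb0mem, hb0⟩ := Finset.mem_image.mp (Finset.min'_mem _ hSne)
    have hb0k : (w.pm b0 : ℕ) = k := by rw [hkdef]; exact hb0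
    have hb0neg : fval w b0 < 0 := (Finset.mem_filter.mp hb0mem).2
    have hkmin : ∀ b, fval w b < 0 → k ≤ (w.pm b).val := fun b hb =>
      Finset.min'_le _ _ (Finset.mem_image.mpr ⟨b, Finset.mem_filter.mpr ⟨Finset.mem_univ _, hb⟩, rfl⟩)
    have hk_lt : k < n := hb0k ▸ (w.pm b0).isLt
    have hk0 : k ≠ 0 := by
      intro h
      have habs : (fval w b0).natAbs = 1 := by rw [fval_natAbs, hb0k, h]
      have habs0 : (fval w ⟨0, hn⟩).natAbs = 1 := by rw [hfix]; rfl
      have : b0 = ⟨0, hn⟩ := fval_abs_inj w (habs.trans habs0.symm)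
      rw [this, hfix] at hb0neg
      omega
    by_cases hk1 : k = 1
    · set i : Fin n := ⟨1, by omega⟩ with hidef
      have hpm : w.pm b0 = i := Fin.ext (by rw [hb0k, hk1])
      have hsymm : w.pm.symm i = b0 := by rw [← hpm, Equiv.symm_apply_apply]
      obtain ⟨-, hneg⟩ := len_Gp1 hn i rfl w hfix
      obtain ⟨hL, hN⟩ := hneg (by rw [hsymm]; exact hb0neg)
      refine ⟨i, le_rfl, by rw [hL]; linarith, by rw [Lenp, Lenp, hL, hN]; linarith⟩
    · set i : Fin n := ⟨k, hk_lt⟩ with hidef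
      set i' : Fin n := ⟨k - 1, by omega⟩ with hi'def
      have hvi' : (i' : ℕ) = i.val - 1 := rfl
      have hpm : w.pm b0 = i := Fin.ext (by rw [hb0k])
      have hsymm : w.pm.symm i = b0 := by rw [← hpm, Equiv.symm_apply_apply]
      have hpbneg : fval w (w.pm.symm i) < 0 := by rw [hsymm]; exact hb0neg
      have hpapos : 0 < fval w (w.pm.symm i') := by
        rcases (fval_ne_zero w (w.pm.symm i')).lt_or_gt with hc | hc
        · exfalso
          have h5 := hkmin _ hc
          rw [w.pm.apply_symm_apply] at h5
          have h6 : k ≤ k - 1 := h5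
          omega
        · exact hc
      obtain ⟨hN, hL⟩ := len_Gsw i i' (by omega) hvi' w
      rw [if_pos hpapos, if_neg (by omega : ¬ 0 < fval w (w.pm.symm i))] at hL
      have hGp : Gp hn i = G i := by rw [Gp, if_neg (by omega : ¬ i.val = 1)]
      rw [← hGp] at hN hL
      exact ⟨i, by omega, by rw [hL]; linarith, by rw [Lenp, Lenp, hL, hN]; linarith⟩
  · push_neg at hex
    have hpos : ∀ b, 0 < fval w b := fun b =>
      ((fval_ne_zero w b).lt_or_gt).resolve_left (not_lt.mpr (hex b))
    by_contra hno
    push_neg at hno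
    apply hne
    have hq0 : w.pm.symm ⟨0, hn⟩ = ⟨0, hn⟩ := fix1_symm hfix
    have horder : ∀ i : Fin n, 2 ≤ i.val →
        w.pm.symm ⟨i.val - 1, lt_of_le_of_lt (Nat.sub_le _ _) i.isLt⟩ < w.pm.symm i := by
      intro i hi2
      set i' : Fin n := ⟨i.val - 1, lt_of_le_of_lt (Nat.sub_le _ _) i.isLt⟩ with hi'def
      by_contra hc
      have hab : w.pm.symm i' ≠ w.pm.symm i := by
        intro h
        have h2 := w.pm.symm.injective h
        have h3 : (i' : ℕ) = (i : ℕ) := congrArg Fin.val h2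
        have h4 : (i' : ℕ) = i.val - 1 := rfl
        omega
      have hord : w.pm.symm i < w.pm.symm i' :=
        lt_of_le_of_ne (le_of_not_gt hc) fun h => hab h.symm
      obtain ⟨hN, hL⟩ := len_Gsw i i' (by omega) rfl w
      rw [if_pos (hpos _), if_pos (hpos _), if_neg hc] at hL
      have hGp : Gp hn i = G i := by rw [Gp, if_neg (by omega : ¬ i.val = 1)]
      rw [← hGp] at hN hL
      have h3 : Lenp (fval (Gp hn i * w)) = Lenp (fval w) - 1 := by
        rw [Lenp, Lenp, hL, hN]; ring
      have h4 := hno i (by omega) (by rw [hL]; linarith)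
      linarith
    have hstep : ∀ b : Fin n, 1 ≤ (b : ℕ) → ∀ hlt : (b : ℕ) - 1 < n,
        w.pm.symm ⟨(b : ℕ) - 1, hlt⟩ < w.pm.symm b := by
      intro b hb hlt
      by_cases hb1 : (b : ℕ) = 1
      · have he : (⟨(b : ℕ) - 1, hlt⟩ : Fin n) = ⟨0, hn⟩ := Fin.ext (by simp [hb1])
        rw [he, hq0]
        have hne0 : w.pm.symm b ≠ ⟨0, hn⟩ := by
          intro hcc
          have h2 := congrArg w.pm hcc
          rw [w.pm.apply_symm_apply, fix1_pm hfix] at h2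
          have h3 : (b : ℕ) = ((⟨0, hn⟩ : Fin n) : ℕ) := congrArg Fin.val h2
          have h4 : ((⟨0, hn⟩ : Fin n) : ℕ) = 0 := rfl
          omega
        refine Fin.lt_def.mpr ?_
        have h5 : ((⟨0, hn⟩ : Fin n) : ℕ) = 0 := rfl
        have h6 : (w.pm.symm b : ℕ) ≠ 0 := fun hcc => hne0 (Fin.ext (by rw [hcc, h5]))
        omega
      · exact horder b (by omega)
    have hmono : ∀ d : ℕ, ∀ a b : Fin n, (a : ℕ) + 1 + d = (b : ℕ) →
        w.pm.symm a < w.pm.symm b := by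
      intro d
      induction d with
      | zero =>
        intro a b hab
        have h1 : 1 ≤ (b : ℕ) := by omega
        have hlt : (b : ℕ) - 1 < n := lt_of_le_of_lt (Nat.sub_le _ _) b.isLt
        have h2 := hstep b h1 hlt
        have ha : a = ⟨(b : ℕ) - 1, hlt⟩ := Fin.ext (by
          have hval : ((⟨(b : ℕ) - 1, hlt⟩ : Fin n) : ℕ) = (b : ℕ) - 1 := rfl
          omega)
        rw [ha]
        exact h2
      | succ d ihd =>
        intro a b hab
        have hlt : (b : ℕ) - 1 < n := lt_of_le_of_lt (Nat.sub_le _ _) b.isLt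
        have h1 := ihd a ⟨(b : ℕ) - 1, hlt⟩ (by
          have : ((⟨(b : ℕ) - 1, hlt⟩ : Fin n) : ℕ) = (b : ℕ) - 1 := rfl
          omega)
        have h2 := hstep b (by omega) hlt
        exact lt_trans h1 h2
    have hsm : StrictMono (fun v => w.pm.symm v : Fin n → Fin n) := by
      intro a b hab
      have h1 : (a : ℕ) < (b : ℕ) := hab
      exact hmono ((b : ℕ) - (a : ℕ) - 1) a b (by omega)
    have hsurj : Function.Surjective (fun v => w.pm.symm v : Fin n → Fin n) :=
      w.pm.symm.surjective
    have hid : ∀ x : Fin n, w.pm.symm x = x := by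
      intro x
      have h1 : (StrictMono.orderIsoOfSurjective _ hsm hsurj) = OrderIso.refl (Fin n) :=
        Subsingleton.elim _ _
      have h2 : (StrictMono.orderIsoOfSurjective _ hsm hsurj) x = w.pm.symm x := rfl
      rw [h1] at h2
      exact h2.symm
    apply fval_inj
    intro b
    have hpm : w.pm b = b := by
      have h1 := hid (w.pm b)
      have h2 : w.pm.symm (w.pm b) = b := w.pm.symm_apply_apply b
      exact h1.symm.trans h2
    have hsg : w.sg b = true := (fval_pos_iff w b).mp (hpos b)
    rw [fval, fval_one, hpm, hsg]
    simp

end SP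
namespace SP

variable {n : ℕ}

lemma exists_reduced (hn : 0 < n) (hn2 : 2 ≤ n) :
    ∀ k : ℕ, ∀ w : SP n, (Len (fval w)).toNat ≤ k → Fix1 hn w →
    ∃ m : List (Fin n), (∀ j ∈ m, 1 ≤ j.val) ∧ (m.map (Gp hn)).prod = w ∧
      (m.length : ℤ) ≤ Lenp (fval w) := by
  intro k
  induction k with
  | zero =>
    intro w hw hfix
    by_cases hw1 : w = 1
    · subst hw1
      refine ⟨[], by simp, by simp, ?_⟩
      rw [Lenp, (len_one).1, (len_one).2]
      norm_num
    · obtain ⟨i, hi, hlen, hlp⟩ := descent hn hn2 w hfix hw1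
      exfalso
      have h0 := Len_nonneg (fval (Gp hn i * w))
      have h1 := Len_nonneg (fval w)
      omega
  | succ k ih =>
    intro w hw hfix
    by_cases hw1 : w = 1
    · subst hw1
      refine ⟨[], by simp, by simp, ?_⟩
      rw [Lenp, (len_one).1, (len_one).2]
      norm_num
    · obtain ⟨i, hi, hlen, hlp⟩ := descent hn hn2 w hfix hw1
      have hfix' := fix1_Gp_mul hn i hi w hfix
      have hlt : (Len (fval (Gp hn i * w))).toNat ≤ k := by
        have h0 := Len_nonneg (fval (Gp hn i * w))
        have h1 := Len_nonneg (fval w)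
        omega
      obtain ⟨m, hm1, hm2, hm3⟩ := ih (Gp hn i * w) hlt hfix'
      refine ⟨i :: m, ?_, ?_, ?_⟩
      · intro j hj
        rcases List.mem_cons.mp hj with h | h
        · exact h ▸ hi
        · exact hm1 j h
      · rw [List.map_cons, List.prod_cons, hm2, ← mul_assoc, Gp_sq, one_mul]
      · rw [List.length_cons]
        push_cast
        linarith

lemma expand_prod (hn : 0 < n) (l : List (Fin n)) :
    (((l.foldr (fun i acc => (if i.val = 1 then [i, ⟨0, hn⟩, i] else [i]) ++ acc) []).map
        G).prod) = (l.map (Gp hn)).prod := by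
  induction l with
  | nil => simp
  | cons a t ih =>
    rw [List.foldr_cons, List.map_cons, List.prod_cons, List.map_append, List.prod_append, ih]
    by_cases h1 : a.val = 1
    · rw [if_pos h1, Gp, if_pos h1]
      simp [mul_assoc]
    · rw [if_neg h1, Gp, if_neg h1]
      simp

lemma expand_length (hn : 0 < n) (l : List (Fin n)) :
    (l.foldr (fun i acc => (if i.val = 1 then [i, ⟨0, hn⟩, i] else [i]) ++ acc) []).length
      = l.length + 2 * l.countP (fun j => decide (j.val = 1)) := by
  induction l with
  | nil => simp
  | cons a t ih =>
    rw [List.foldr_cons, List.length_append, ih]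
    by_cases h1 : a.val = 1 <;> simp [h1, List.countP_cons] <;> omega

end SP


set_option maxHeartbeats 1000000 in
/-- If `t'_{i₁} ⋯ t'_{i_ℓ}` is a reduced expression for `w ∈ Ω'₀` (with respect
to the generators `t'_2, …, t'_n`), then replacing each occurrence of `t'_2` by
`t₂ t₁ t₂` and leaving the other letters unchanged yields a reduced expression
for `w` in `Ω₀` with respect to `t₁, …, t_n`. -/
theorem expanded_word_is_reduced
    (n : ℕ) (hn2 : 2 ≤ n) (hn : 0 < n) (l : List (Fin n))
    (hl : ∀ i ∈ l, 1 ≤ i.val)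
    (hred : ∀ l' : List (Fin n), (∀ i ∈ l', 1 ≤ i.val) →
      (l'.map (genC' n hn)).prod = (l.map (genC' n hn)).prod → l.length ≤ l'.length) :
    letI L : List (Fin n) :=
      l.foldr (fun i acc => (if i.val = 1 then [i, ⟨0, hn⟩, i] else [i]) ++ acc) []
    (L.map (genC n)).prod = (l.map (genC' n hn)).prod ∧
      ∀ l'' : List (Fin n),
        (l''.map (genC n)).prod = (l.map (genC' n hn)).prod → L.length ≤ l''.length := by
  have lift_eq : ∀ ml : List (Fin n),
      (ml.map (genC n)).prod = SP.tm ((ml.map SP.G).prod) := by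
    intro ml
    rw [SP.tm_prod, List.map_map]
    congr 1
    exact List.map_congr_left fun a _ => (SP.tm_G a).symm
  have liftp_eq : ∀ ml : List (Fin n),
      (ml.map (genC' n hn)).prod = SP.tm ((ml.map (SP.Gp hn)).prod) := by
    intro ml
    rw [SP.tm_prod, List.map_map]
    congr 1
    exact List.map_congr_left fun a _ => (SP.tm_Gp hn a).symm
  set W : SP n := (l.map (SP.Gp hn)).prod with hWdef
  obtain ⟨hfix, hub, hkey⟩ := SP.key_list hn l hl
  constructor
  · rw [lift_eq, SP.expand_prod hn l, liftp_eq]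
  · intro l'' hmat
    have hlift : (l''.map SP.G).prod = W :=
      SP.tm_injective (by rw [← lift_eq, hmat, liftp_eq])
    have hlen'' : SP.Len (SP.fval W) ≤ (l''.length : ℤ) := by
      rw [← hlift]
      exact SP.len_word_le hn l''
    obtain ⟨m, hm1, hm2, hm3⟩ :=
      SP.exists_reduced hn hn2 (SP.Len (SP.fval W)).toNat W le_rfl hfix
    have hmmat : (m.map (genC' n hn)).prod = (l.map (genC' n hn)).prod := by
      rw [liftp_eq, liftp_eq, hm2]
    have hll : l.length ≤ m.length := hred m hm1 hmmat
    have hge : (l.length : ℤ) ≤ SP.Lenp (SP.fval W) :=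
      le_trans (by exact_mod_cast hll) hm3
    have hLen := hkey hge
    have hLlen := SP.expand_length hn l
    have : ((l.foldr (fun i acc =>
        (if i.val = 1 then [i, ⟨0, hn⟩, i] else [i]) ++ acc) []).length : ℤ)
        ≤ (l''.length : ℤ) := by
      rw [hLlen]
      push_cast
      rw [← hWdef] at hLen
      linarith [hLen, hlen'']
    exact_mod_cast this
end

section
/- Let w ∈ Ω'_0 (the type C_{n−1} subgroup of the type C_n signed permutation group Ω_0 generated by t'_2 = t_2 t_1 t_2 and t_3,…,t_n). Then the number t(w) of indices i such that w(2ε_i) is a negative root equals the number of occurrences of the generator t'_2 in any reduced expression of w with respect to the generators t'_2, t_3, …, t_n. -/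
noncomputable section
namespace FlipAux

variable {n : ℕ}

def sgnMat (π : Equiv.Perm (Fin n)) (ε : Fin n → ℝ) : Matrix (Fin n) (Fin n) ℝ :=
  Matrix.of fun a b => if a = π b then ε b else 0

lemma sgnMat_mul (π π' : Equiv.Perm (Fin n)) (ε ε' : Fin n → ℝ) :
    sgnMat π ε * sgnMat π' ε' = sgnMat (π'.trans π) fun b => ε (π' b) * ε' b := by
  ext a b
  simp only [sgnMat, Matrix.mul_apply, Matrix.of_apply, Equiv.trans_apply]
  rw [Finset.sum_eq_single (π' b)]
  · simp; exact if_congr Iff.rfl rfl rfl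
  · intro c _ hc
    simp [hc]
  · simp

lemma sgnMat_one : sgnMat (Equiv.refl (Fin n)) (fun _ => (1:ℝ)) = 1 := by
  ext a b
  simp [sgnMat, Matrix.one_apply]; exact if_congr Iff.rfl rfl rfl

def gp (a : Fin n) : Equiv.Perm (Fin n) :=
  if a.val = 1 then Equiv.refl _
  else Equiv.swap a ⟨a.val - 1, lt_of_le_of_lt (Nat.sub_le _ _) a.isLt⟩

def ge (a : Fin n) (x : Fin n) : ℝ := if a.val = 1 ∧ x.val = 1 then -1 else 1

lemma genC_eq_of_ne (a : Fin n) (ha : a.val ≠ 0) :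
    genC n a = sgnMat (Equiv.swap a ⟨a.val - 1, lt_of_le_of_lt (Nat.sub_le _ _) a.isLt⟩)
      (fun _ => 1) := by
  simp only [genC, ha, if_false]
  rfl

lemma genC_zero (hn : 0 < n) :
    genC n ⟨0, hn⟩ = sgnMat (Equiv.refl _) (fun x => if x = ⟨0,hn⟩ then -1 else 1) := by
  ext a b
  simp only [genC, if_pos rfl, Matrix.diagonal_apply, sgnMat, Matrix.of_apply,
    Equiv.refl_apply, if_true]
  split_ifs with h1 h2 <;> simp_all

lemma genC'_eq (hn : 0 < n) (a : Fin n) (ha : 1 ≤ a.val) :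
    genC' n hn a = sgnMat (gp a) (ge a) := by
  by_cases h1 : a.val = 1
  · have hz : (⟨a.val - 1, lt_of_le_of_lt (Nat.sub_le _ _) a.isLt⟩ : Fin n) = ⟨0, hn⟩ := by
      ext; simp [h1]
    rw [genC', if_pos h1, genC_eq_of_ne a (by omega), hz, genC_zero hn,
      sgnMat_mul, sgnMat_mul]
    have hperm : ((Equiv.swap a ⟨0, hn⟩).trans
        ((Equiv.refl (Fin n)).trans (Equiv.swap a ⟨0, hn⟩))) = gp a := by
      rw [gp, if_pos h1]
      ext x
      simp
    rw [hperm]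
    refine congrArg (sgnMat (gp a)) (funext fun b => ?_)
    simp only [Equiv.refl_apply, one_mul, mul_one, ge, h1, true_and]
    have hswap : Equiv.swap a ⟨0, hn⟩ b = ⟨0, hn⟩ ↔ b = a := by
      rw [Equiv.swap_apply_eq_iff, Equiv.swap_apply_right]
    have hval : b = a ↔ b.val = 1 := by
      rw [Fin.ext_iff, h1]
    split_ifs with h2 h3 h3 <;> simp_all
  · rw [genC', if_neg h1, genC_eq_of_ne a (by omega)]
    rw [gp, if_neg h1]
    refine congrArg _ (funext fun b => ?_)
    simp [ge, h1]

def wp : List (Fin n) → Equiv.Perm (Fin n)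
  | [] => Equiv.refl _
  | a :: t => (wp t).trans (gp a)

def hits (b : Fin n) : List (Fin n) → ℕ
  | [] => 0
  | a :: t => hits b t + (if a.val = 1 ∧ (wp t b).val = 1 then 1 else 0)

lemma prod_eq (hn : 0 < n) (l : List (Fin n)) (hl : ∀ i ∈ l, 1 ≤ i.val) :
    (l.map (genC' n hn)).prod = sgnMat (wp l) (fun b => (-1:ℝ) ^ hits b l) := by
  induction l with
  | nil =>
    simp only [List.map_nil, List.prod_nil, wp, hits, pow_zero]
    exact sgnMat_one.symm
  | cons a t ih =>
    rw [List.map_cons, List.prod_cons, ih (fun i hi => hl i (List.mem_cons_of_mem _ hi)),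
      genC'_eq hn a (hl a List.mem_cons_self), sgnMat_mul]
    show sgnMat ((wp t).trans (gp a)) _ = sgnMat (wp (a :: t)) _
    refine congrArg _ (funext fun b => ?_)
    show ge a (wp t b) * (-1:ℝ) ^ hits b t = (-1:ℝ) ^ hits b (a :: t)
    show _ = (-1:ℝ) ^ (hits b t + if a.val = 1 ∧ (wp t b).val = 1 then 1 else 0)
    rw [ge]
    split_ifs with h
    · rw [pow_succ]; ring
    · rw [add_zero, one_mul]

lemma wp_append (u v : List (Fin n)) : wp (u ++ v) = (wp v).trans (wp u) := by
  induction u with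
  | nil => simp [wp]
  | cons a t ih =>
    show (wp (t ++ v)).trans (gp a) = (wp v).trans ((wp t).trans (gp a))
    rw [ih, Equiv.trans_assoc]

lemma sum_hits (hn2 : 2 ≤ n) (l : List (Fin n)) :
    ∑ b : Fin n, hits b l = l.count ⟨1, hn2⟩ := by
  induction l with
  | nil => simp [hits]
  | cons a t ih =>
    show (∑ b : Fin n, (hits b t + if a.val = 1 ∧ (wp t b).val = 1 then 1 else 0))
      = (a :: t).count ⟨1, hn2⟩
    rw [Finset.sum_add_distrib, ih, List.count_cons]
    by_cases h : a.val = 1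
    · have ha : (⟨1, hn2⟩ : Fin n) = a := (Fin.ext h).symm
      simp only [h, true_and, ha, if_pos rfl]
      congr 1
      have hcond : ∀ b : Fin n, ((wp t b).val = 1 ↔ b = (wp t).symm ⟨1, hn2⟩) := by
        intro b
        rw [← Equiv.apply_eq_iff_eq_symm_apply, Fin.ext_iff]
      simp_rw [hcond]
      simp
    · have ha : ¬ (⟨1, hn2⟩ : Fin n) = a := by
        intro he
        exact h (by rw [← he])
      have ha' : ¬ a = (⟨1, hn2⟩ : Fin n) := fun he => ha he.symm
      simp [h, ha, ha']

lemma conj_D (hn2 : 2 ≤ n) (π : Equiv.Perm (Fin n)) (ε : Fin n → ℝ)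
    (hπ : π ⟨1,hn2⟩ = ⟨1,hn2⟩) :
    sgnMat (gp ⟨1,hn2⟩) (ge ⟨1,hn2⟩) * sgnMat π ε * sgnMat (gp ⟨1,hn2⟩) (ge ⟨1,hn2⟩)
      = sgnMat π ε := by
  have hg : gp (⟨1,hn2⟩ : Fin n) = Equiv.refl _ := if_pos rfl
  rw [hg, sgnMat_mul, sgnMat_mul]
  have hperm : (Equiv.refl (Fin n)).trans (π.trans (Equiv.refl (Fin n))) = π := by
    ext x; simp
  rw [hperm]
  refine congrArg _ (funext fun b => ?_)
  show ge ⟨1,hn2⟩ (π ((Equiv.refl (Fin n)) b)) * ε ((Equiv.refl (Fin n)) b)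
      * ge ⟨1,hn2⟩ b = ε b
  simp only [Equiv.refl_apply, ge, true_and]
  by_cases hb : b = ⟨1,hn2⟩
  · subst hb
    rw [hπ]
    simp
  · have h1 : ¬ (b.val = 1) := fun hv => hb (Fin.ext hv)
    have h2 : ¬ ((π b).val = 1) := by
      intro hv
      exact hb (π.injective (by rw [hπ]; exact Fin.ext hv))
    simp [h1, h2]

lemma exists_split_one (b : Fin n) (l : List (Fin n)) (h : 1 ≤ hits b l) :
    ∃ (u v : List (Fin n)) (a : Fin n),
      l = u ++ a :: v ∧ a.val = 1 ∧ (wp v b).val = 1 := by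
  induction l with
  | nil => simp [hits] at h
  | cons a t ih =>
    by_cases ht : 1 ≤ hits b t
    · obtain ⟨u, v, a', h1, h2, h3⟩ := ih ht
      exact ⟨a :: u, v, a', by rw [h1]; rfl, h2, h3⟩
    · have h0 : hits b t = 0 := by omega
      have : hits b (a :: t) = hits b t + (if a.val = 1 ∧ (wp t b).val = 1 then 1 else 0) := rfl
      rw [this, h0, zero_add] at h
      split_ifs at h with hc
      · exact ⟨[], t, a, rfl, hc.1, hc.2⟩
      · omega

lemma exists_split_two (b : Fin n) (l : List (Fin n)) (h : 2 ≤ hits b l) :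
    ∃ (u m v : List (Fin n)) (a a' : Fin n),
      l = u ++ a :: (m ++ a' :: v) ∧ a.val = 1 ∧ a'.val = 1 ∧
        (wp v b).val = 1 ∧ (wp (m ++ a' :: v) b).val = 1 := by
  induction l with
  | nil => simp [hits] at h
  | cons a t ih =>
    by_cases ht : 2 ≤ hits b t
    · obtain ⟨u, m, v, a1, a2, h1, h2, h3, h4, h5⟩ := ih ht
      exact ⟨a :: u, m, v, a1, a2, by rw [h1]; rfl, h2, h3, h4, h5⟩
    · have heq : hits b (a :: t) = hits b t + (if a.val = 1 ∧ (wp t b).val = 1 then 1 else 0) := rfl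
      rw [heq] at h
      split_ifs at h with hc
      · have ht1 : 1 ≤ hits b t := by omega
        obtain ⟨u, v, a', h1, h2, h3⟩ := exists_split_one b t ht1
        refine ⟨[], u, v, a, a', by rw [h1]; rfl, hc.1, h2, h3, ?_⟩
        rw [← h1]; exact hc.2
      · omega

end FlipAux

end


/-- For `w ∈ Ω'₀` (the type `C_{n−1}` subgroup of the signed permutation group
`Ω₀` generated by `t'_2 = t₂t₁t₂` and `t₃, …, t_n`), the number `t(w)` of
indices `i` such that `w(2ε_i)` is a negative root (i.e. the `i`-th column of
the matrix of `w` has a negative entry) equals the number of occurrences of the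
generator `t'_2` in any reduced expression of `w` with respect to
`t'_2, t₃, …, t_n`. -/
theorem flip_count_eq_count_t'2
    (n : ℕ) (hn2 : 2 ≤ n) (hn : 0 < n) (l : List (Fin n))
    (hl : ∀ i ∈ l, 1 ≤ i.val)
    (hred : ∀ l' : List (Fin n), (∀ i ∈ l', 1 ≤ i.val) →
      (l'.map (genC' n hn)).prod = (l.map (genC' n hn)).prod → l.length ≤ l'.length) :
    Nat.card {i : Fin n // ∃ j : Fin n, (l.map (genC' n hn)).prod j i < 0}
      = l.count ⟨1, hn2⟩ := by
  classical
  have hprod := FlipAux.prod_eq hn l hl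
  -- Step 1: the count of negative columns is the number of b with odd hits.
  have hN : Nat.card {i : Fin n // ∃ j : Fin n, (l.map (genC' n hn)).prod j i < 0}
      = (Finset.univ.filter fun b : Fin n => Odd (FlipAux.hits b l)).card := by
    have hiff : ∀ i : Fin n,
        (∃ j : Fin n, (l.map (genC' n hn)).prod j i < 0) ↔ Odd (FlipAux.hits i l) := by
      intro i
      rw [hprod]
      constructor
      · rintro ⟨j, hj⟩
        by_contra hodd
        rw [Nat.not_odd_iff_even] at hodd
        simp only [FlipAux.sgnMat, Matrix.of_apply] at hj
        split_ifs at hj with hji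
        · rw [hodd.neg_one_pow] at hj; linarith
        · linarith
      · intro hodd
        refine ⟨FlipAux.wp l i, ?_⟩
        simp only [FlipAux.sgnMat, Matrix.of_apply, if_pos rfl, hodd.neg_one_pow]
        norm_num
    rw [Nat.card_congr (Equiv.subtypeEquivRight hiff), Nat.card_eq_fintype_card,
      Fintype.card_subtype]
  rw [hN]
  by_contra hne
  -- Step 2: some trajectory hits t'2 at least twice.
  have hexists : ∃ b : Fin n, 2 ≤ FlipAux.hits b l := by
    by_contra hall
    push_neg at hall
    apply hne
    rw [← FlipAux.sum_hits hn2 l, Finset.card_filter]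
    refine Finset.sum_congr rfl fun b _ => ?_
    have h2 := hall b
    interval_cases h : FlipAux.hits b l
    · simp [Nat.odd_iff]
    · simp [Nat.odd_iff]
  obtain ⟨b, hb⟩ := hexists
  obtain ⟨u, m, v, a, a', hdecomp, ha, ha', hv, hmv⟩ := FlipAux.exists_split_two b l hb
  have haone : a = (⟨1, hn2⟩ : Fin n) := Fin.ext ha
  have ha'one : a' = (⟨1, hn2⟩ : Fin n) := Fin.ext ha'
  subst haone ha'one
  -- Step 3: wp m fixes 1.
  have hma : FlipAux.wp m (⟨1, hn2⟩ : Fin n) = ⟨1, hn2⟩ := by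
    have h1 : FlipAux.wp (m ++ (⟨1, hn2⟩ : Fin n) :: v) b
        = FlipAux.wp m (FlipAux.wp ((⟨1, hn2⟩ : Fin n) :: v) b) := by
      rw [FlipAux.wp_append]; rfl
    have hg : FlipAux.gp (⟨1, hn2⟩ : Fin n) = Equiv.refl _ := if_pos rfl
    have h2 : FlipAux.wp ((⟨1, hn2⟩ : Fin n) :: v) b = FlipAux.wp v b := by
      show FlipAux.gp (⟨1, hn2⟩ : Fin n) (FlipAux.wp v b) = _
      rw [hg]; rfl
    have hvb : FlipAux.wp v b = ⟨1, hn2⟩ := Fin.ext hv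
    have h3 := hmv
    rw [h1, h2, hvb] at h3
    exact Fin.ext h3
  -- Step 4: deleting the two occurrences of t'2 preserves the product.
  set D := genC' n hn (⟨1, hn2⟩ : Fin n) with hD
  have hlm : ∀ i ∈ m, 1 ≤ i.val := by
    intro i hi
    apply hl
    rw [hdecomp]
    simp [hi]
  have hDm : D * (m.map (genC' n hn)).prod * D = (m.map (genC' n hn)).prod := by
    rw [hD, FlipAux.genC'_eq hn _ (by norm_num), FlipAux.prod_eq hn m hlm]
    exact FlipAux.conj_D hn2 _ _ hma
  have key : D * ((m.map (genC' n hn)).prod * (D * (v.map (genC' n hn)).prod))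
      = (m.map (genC' n hn)).prod * (v.map (genC' n hn)).prod := by
    calc D * ((m.map (genC' n hn)).prod * (D * (v.map (genC' n hn)).prod))
        = (D * (m.map (genC' n hn)).prod * D) * (v.map (genC' n hn)).prod := by
          simp only [mul_assoc]
      _ = (m.map (genC' n hn)).prod * (v.map (genC' n hn)).prod := by rw [hDm]
  have hprodeq : (((u ++ (m ++ v)).map (genC' n hn)).prod) = (l.map (genC' n hn)).prod := by
    rw [hdecomp]
    simp only [List.map_append, List.map_cons, List.prod_append, List.prod_cons]
    rw [← hD, key]
  have hletters : ∀ i ∈ u ++ (m ++ v), 1 ≤ i.val := by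
    intro i hi
    apply hl
    rw [hdecomp]
    simp only [List.mem_append, List.mem_cons] at hi ⊢
    tauto
  have hlen := hred (u ++ (m ++ v)) hletters hprodeq
  rw [hdecomp] at hlen
  simp only [List.length_append, List.length_cons] at hlen
  omega
end

section
/- Let G be a group, P = M ⋉ U a subgroup written as a semidirect-type product (every p ∈ P factors uniquely as p = m·u with m ∈ M, u ∈ U), and Q = L ⋉ V ⊆ P another such subgroup with L ⊆ M and V = (M ∩ V)·U. Let K ≤ G be a subgroup with K ∩ P = (K ∩ M)(K ∩ U), and suppose additionally (K ∩ M) ∩ (M ∩ Q) = (K ∩ M ∩ L)(K ∩ M ∩ V). Then K ∩ Q = (K ∩ L)(K ∩ V) and moreover K ∩ V = (K ∩ M ∩ V)(K ∩ U). -/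
open scoped Pointwise

/-- Abstract Iwahori-factorization transitivity. Let `G` be a group,
`P = M·U` with unique factorization, `Q = L·V ⊆ P` with `L ≤ M`, `U ≤ V` and
`V = (M ∩ V)·U`, and `K` a subgroup with `K ∩ P = (K ∩ M)(K ∩ U)` and
`(K ∩ M) ∩ (M ∩ Q) = (K ∩ M ∩ L)(K ∩ M ∩ V)`. Then
`K ∩ Q = (K ∩ L)(K ∩ V)` and `K ∩ V = (K ∩ M ∩ V)(K ∩ U)`. -/
theorem iwahori_factorization_transitivity
    {G : Type*} [Group G] (P M U Q L V K : Subgroup G)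
    (hP : (P : Set G) = (M : Set G) * (U : Set G))
    (hPuniq : ∀ m ∈ M, ∀ u ∈ U, ∀ m' ∈ M, ∀ u' ∈ U,
      (m : G) * u = m' * u' → m = m' ∧ u = u')
    (hQ : (Q : Set G) = (L : Set G) * (V : Set G))
    (hLM : L ≤ M) (hUV : U ≤ V) (hQP : Q ≤ P)
    (hV : (V : Set G) = ((M ⊓ V : Subgroup G) : Set G) * (U : Set G))
    (hK : ((K ⊓ P : Subgroup G) : Set G)
      = ((K ⊓ M : Subgroup G) : Set G) * ((K ⊓ U : Subgroup G) : Set G))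
    (hKM : ((K ⊓ M ⊓ (M ⊓ Q) : Subgroup G) : Set G)
      = ((K ⊓ M ⊓ L : Subgroup G) : Set G) * ((K ⊓ M ⊓ V : Subgroup G) : Set G)) :
    ((K ⊓ Q : Subgroup G) : Set G)
        = ((K ⊓ L : Subgroup G) : Set G) * ((K ⊓ V : Subgroup G) : Set G) ∧
    ((K ⊓ V : Subgroup G) : Set G)
        = ((K ⊓ M ⊓ V : Subgroup G) : Set G) * ((K ⊓ U : Subgroup G) : Set G) := by
  have hVQ : V ≤ Q := by
    intro v hv
    have : (v : G) ∈ (Q : Set G) := by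
      rw [hQ]; exact ⟨1, one_mem L, v, hv, one_mul v⟩
    exact this
  have hLQ : L ≤ Q := by
    intro l hl
    have : (l : G) ∈ (Q : Set G) := by
      rw [hQ]; exact ⟨l, hl, 1, one_mem V, mul_one l⟩
    exact this
  have h2 : ((K ⊓ V : Subgroup G) : Set G)
      = ((K ⊓ M ⊓ V : Subgroup G) : Set G) * ((K ⊓ U : Subgroup G) : Set G) := by
    apply Set.Subset.antisymm
    · intro k hk
      have hkK : k ∈ K := hk.1
      have hkV : k ∈ V := hk.2
      have hkP : k ∈ ((K ⊓ P : Subgroup G) : Set G) := ⟨hkK, hQP (hVQ hkV)⟩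
      rw [hK] at hkP
      obtain ⟨m, hm, u, hu, hmu⟩ := hkP
      have hmu : m * u = k := hmu
      have hkV' : k ∈ (V : Set G) := hkV
      rw [hV] at hkV'
      obtain ⟨m', hm', u', hu', hmu'⟩ := hkV'
      have hmu' : m' * u' = k := hmu'
      obtain ⟨hmm, huu⟩ := hPuniq m hm.2 u hu.2 m' hm'.1 u' hu' (by rw [hmu, hmu'])
      refine ⟨m, ⟨⟨hm.1, hm.2⟩, hmm ▸ hm'.2⟩, u, hu, hmu⟩
    · rintro k ⟨m, hm, u, hu, hmu⟩
      exact ⟨hmu ▸ mul_mem hm.1.1 hu.1, hmu ▸ mul_mem hm.2 (hUV hu.2)⟩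
  refine ⟨?_, h2⟩
  apply Set.Subset.antisymm
  · intro k hk
    have hkK : k ∈ K := hk.1
    have hkQ : k ∈ Q := hk.2
    have hkQ' : k ∈ (Q : Set G) := hkQ
    rw [hQ] at hkQ'
    obtain ⟨l, hl, v, hv, hlv⟩ := hkQ'
    have hlv : l * v = k := hlv
    have hv' : v ∈ (V : Set G) := hv
    rw [hV] at hv'
    obtain ⟨m1, hm1, u, hu, hmu⟩ := hv'
    have hmu : m1 * u = v := hmu
    have hkP : k ∈ ((K ⊓ P : Subgroup G) : Set G) := ⟨hkK, hQP hkQ⟩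
    rw [hK] at hkP
    obtain ⟨m', hm', u', hu', hmu'⟩ := hkP
    have hmu' : m' * u' = k := hmu'
    have hfac : (l * m1) * u = k := by rw [mul_assoc, hmu, hlv]
    obtain ⟨hmm, huu⟩ := hPuniq (l * m1) (mul_mem (hLM hl) hm1.1) u hu m' hm'.2 u' hu'.2
      (by rw [hfac, hmu'])
    -- m' ∈ K ⊓ M ⊓ (M ⊓ Q)
    have hm'Q : m' ∈ Q := hmm ▸ mul_mem (hLQ hl) (hVQ hm1.2)
    have : (m' : G) ∈ ((K ⊓ M ⊓ (M ⊓ Q) : Subgroup G) : Set G) :=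
      ⟨⟨hm'.1, hm'.2⟩, ⟨hm'.2, hm'Q⟩⟩
    rw [hKM] at this
    obtain ⟨l', hl', v', hv', hlv'⟩ := this
    have hlv' : l' * v' = m' := hlv'
    refine ⟨l', ⟨hl'.1.1, hl'.2⟩, v' * u', ⟨mul_mem hv'.1.1 hu'.1, mul_mem hv'.2 (hUV hu'.2)⟩, ?_⟩
    show l' * (v' * u') = k
    rw [← mul_assoc, hlv', hmu']
  · rintro k ⟨l, hl, v, hv, hlv⟩
    exact ⟨hlv ▸ mul_mem hl.1 hv.1, hlv ▸ mul_mem (hLQ hl.2) (hVQ hv.2)⟩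
end
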